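/- Detailed balance of the full Swendsen–Wang kernel: define the one-step Swendsen–Wang transition probability K(s,t) = Σ_{w : E(G)→{0,1}} P(s,w) · Q(w,t). Then for all spin configurations s and t on a finite simple graph G, W_V(s) · K(s,t) = W_V(t) · K(t,s). -/

import Mathlib

open Classical

noncomputable section

variable {V : Type*} [Fintype V] [DecidableEq V]

/-- Product `s i * s j` of spins over an unordered edge `{i, j}`. -/
def pairProd (s : V → ℝ) : Sym2 V → ℝ :=
  Sym2.lift ⟨fun i j => s i * s j, fun _ _ => mul_comm _ _⟩

/-- Unnormalized Gibbs weight
`W_V(s) = exp (β Σ_{{i,j} ∈ E} s_i s_j + β Σ_i h_i s_i)`. -/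
def WV (G : SimpleGraph V) [DecidableRel G.Adj] (β : ℝ) (h : V → ℝ) (s : V → ℝ) : ℝ :=
  Real.exp (β * ∑ e ∈ G.edgeFinset, pairProd s e + β * ∑ i : V, h i * s i)

/-- Edge factor of the joint vertex-edge weight:
`(1 - e^{-2β})` if `w_{ij} = 1` and `s_i = s_j`, `e^{-2β}` if `w_{ij} = 0`, else `0`. -/
def edgeFactorVE (β : ℝ) (s : V → ℝ) (b : Bool) : Sym2 V → ℝ :=
  Sym2.lift ⟨fun i j =>
    if b then (if s i = s j then 1 - Real.exp (-2 * β) else 0) else Real.exp (-2 * β),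
    by intro i j; by_cases hb : b <;> simp [hb, eq_comm]⟩

/-- Unnormalized joint vertex-edge weight `W_VE(s, w)`. -/
def WVE (G : SimpleGraph V) [DecidableRel G.Adj] (β : ℝ) (h : V → ℝ) (s : V → ℝ)
    (w : G.edgeSet → Bool) : ℝ :=
  (∏ e : G.edgeSet, edgeFactorVE β s (w e) e.val) * Real.exp (β * ∑ i : V, h i * s i)

/-- Edge factor of the Swendsen-Wang edge-step probability: if `s_i = s_j` then
`(1 - e^{-2β})` for `w_{ij} = 1` and `e^{-2β}` for `w_{ij} = 0`; otherwise `0` for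
`w_{ij} = 1` and `1` for `w_{ij} = 0`. -/
def edgeFactorP (β : ℝ) (s : V → ℝ) (b : Bool) : Sym2 V → ℝ :=
  Sym2.lift ⟨fun i j =>
    if s i = s j then (if b then 1 - Real.exp (-2 * β) else Real.exp (-2 * β))
    else (if b then 0 else 1),
    by intro i j; simp [eq_comm]⟩

/-- Swendsen-Wang edge-step probability `P(s, w)`. -/
def swP (G : SimpleGraph V) [DecidableRel G.Adj] (β : ℝ) (s : V → ℝ)
    (w : G.edgeSet → Bool) : ℝ :=
  ∏ e : G.edgeSet, edgeFactorP β s (w e) e.val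

/-- Spanning subgraph of `G` whose edges are the edges `e` with `w e = 1`. -/
def openSubgraph (G : SimpleGraph V) [DecidableRel G.Adj] (w : G.edgeSet → Bool) :
    SimpleGraph V where
  Adj i j := ∃ hij : G.Adj i j, w ⟨Sym2.mk i j, G.mem_edgeSet.mpr hij⟩ = true
  symm := ⟨by
    rintro i j ⟨hij, hw⟩
    refine ⟨hij.symm, ?_⟩
    have he : (⟨Sym2.mk j i, G.mem_edgeSet.mpr hij.symm⟩ : G.edgeSet)
        = ⟨Sym2.mk i j, G.mem_edgeSet.mpr hij⟩ := Subtype.ext (Sym2.eq_swap)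
    rw [he]; exact hw⟩
  loopless := ⟨by rintro i ⟨hij, -⟩; exact G.irrefl hij⟩

/-- `h_γ = Σ_{i ∈ γ} h_i`: sum of the field over a connected component `γ ∈ C_w`. -/
def hComp (G : SimpleGraph V) [DecidableRel G.Adj] (h : V → ℝ) (w : G.edgeSet → Bool)
    (γ : (openSubgraph G w).ConnectedComponent) : ℝ :=
  ∑ i ∈ Finset.univ.filter (fun i => (openSubgraph G w).connectedComponentMk i = γ), h i

/-- A configuration is compatible with the edge configuration `w` if it is constant on each
connected component of the subgraph of open edges. -/
def Compatible (G : SimpleGraph V) [DecidableRel G.Adj] (w : G.edgeSet → Bool)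
    (t : V → ℝ) : Prop :=
  ∀ i j : V, (openSubgraph G w).connectedComponentMk i = (openSubgraph G w).connectedComponentMk j
    → t i = t j

/-- Swendsen-Wang spin-step probability `Q(w, t)`: for `t` compatible with `w`, the product
over components `γ ∈ C_w` of `e^{β h_γ τ_γ} / (e^{β h_γ} + e^{-β h_γ})`, where
`τ_γ = t γ.out` is the common value of `t` on `γ`; and `0` for incompatible `t`. -/
def swQ (G : SimpleGraph V) [DecidableRel G.Adj] (β : ℝ) (h : V → ℝ) (w : G.edgeSet → Bool)
    (t : V → ℝ) : ℝ :=
  if Compatible G w t then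
    ∏ γ : (openSubgraph G w).ConnectedComponent,
      Real.exp (β * hComp G h w γ * t γ.out) /
        (Real.exp (β * hComp G h w γ) + Real.exp (-(β * hComp G h w γ)))
  else 0

/-- Unnormalized edge weight
`W_E(w) = Π_{w_e = 1} (1 - e^{-2β}) · Π_{w_e = 0} e^{-2β} · Π_{γ ∈ C_w} (e^{β h_γ} + e^{-β h_γ})`. -/
def WE (G : SimpleGraph V) [DecidableRel G.Adj] (β : ℝ) (h : V → ℝ)
    (w : G.edgeSet → Bool) : ℝ :=
  (∏ _e ∈ Finset.univ.filter (fun e : G.edgeSet => w e = true), (1 - Real.exp (-2 * β))) *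
  (∏ _e ∈ Finset.univ.filter (fun e : G.edgeSet => w e = false), Real.exp (-2 * β)) *
  ∏ γ : (openSubgraph G w).ConnectedComponent,
    (Real.exp (β * hComp G h w γ) + Real.exp (-(β * hComp G h w γ)))


section Aux

variable (β : ℝ) (s : V → ℝ)

lemma perEdge (hs : ∀ i, s i = 1 ∨ s i = -1) (b : Bool) (e : Sym2 V) :
    Real.exp (β * pairProd s e) * edgeFactorP β s b e
      = Real.exp β * edgeFactorVE β s b e := by
  induction e using Sym2.ind with
  | _ i j =>
    simp only [pairProd, edgeFactorP, edgeFactorVE, Sym2.lift_mk]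
    by_cases hij : s i = s j
    · have h1 : s i * s j = 1 := by
        rcases hs j with h | h <;> rw [hij, h] <;> norm_num
      rw [h1, hij]
      cases b <;> simp
    · have h1 : s i * s j = -1 := by
        rcases hs i with h | h <;> rcases hs j with h' | h' <;>
          rw [h, h'] at hij ⊢ <;> simp_all
      rw [h1]
      cases b <;> simp [hij]
      rw [← Real.exp_add]; ring_nf

lemma step1 (G : SimpleGraph V) [DecidableRel G.Adj] (h : V → ℝ)
    (hs : ∀ i, s i = 1 ∨ s i = -1) (w : G.edgeSet → Bool) :
    WV G β h s * swP G β s w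
      = Real.exp β ^ (Fintype.card G.edgeSet) * WVE G β h s w := by
  unfold WV swP WVE
  have hsum : ∑ e ∈ G.edgeFinset, pairProd s e = ∑ e : G.edgeSet, pairProd s e.val := by
    rw [SimpleGraph.edgeFinset, ← Finset.sum_set_coe]
  have key : (∏ e : G.edgeSet, Real.exp (β * pairProd s e.val)) *
      (∏ e : G.edgeSet, edgeFactorP β s (w e) e.val)
      = Real.exp β ^ (Fintype.card G.edgeSet) *
        ∏ e : G.edgeSet, edgeFactorVE β s (w e) e.val := by
    rw [← Finset.prod_mul_distrib]
    rw [Finset.prod_congr rfl (fun e _ => perEdge β s hs (w e) e.val),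
      Finset.prod_mul_distrib, Finset.prod_const, Finset.card_univ]
  rw [Real.exp_add, hsum, Finset.mul_sum, Real.exp_sum, mul_right_comm, key]
  ring

lemma walk_exists_adj_ne (H : SimpleGraph V) {i j : V} (p : H.Walk i j)
    (hne : s i ≠ s j) : ∃ u v : V, H.Adj u v ∧ s u ≠ s v := by
  induction p with
  | nil => exact absurd rfl hne
  | @cons a b c hadj p ih =>
    by_cases hab : s a = s b
    · exact ih (by rw [← hab]; exact hne)
    · exact ⟨a, b, hadj, hab⟩

lemma step2 (G : SimpleGraph V) [DecidableRel G.Adj] (h : V → ℝ)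
    (w : G.edgeSet → Bool) :
    WVE G β h s w = WE G β h w * swQ G β h w s := by
  by_cases hc : Compatible G w s
  · unfold WVE WE swQ
    rw [if_pos hc]
    -- edge product
    have hopen : ∀ e : G.edgeSet, w e = true →
        edgeFactorVE β s (w e) e.val = 1 - Real.exp (-2 * β) := by
      rintro ⟨p, hp⟩ hw
      induction p using Sym2.ind with
      | _ i j =>
        have hadj : G.Adj i j := (G.mem_edgeSet).mp hp
        have hOadj : (openSubgraph G w).Adj i j := ⟨hadj, hw⟩
        have hsij : s i = s j :=
          hc i j (SimpleGraph.ConnectedComponent.sound hOadj.reachable)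
        simp [edgeFactorVE, hw, hsij]
    have hclosed : ∀ e : G.edgeSet, w e = false →
        edgeFactorVE β s (w e) e.val = Real.exp (-2 * β) := by
      rintro ⟨p, hp⟩ hw
      induction p using Sym2.ind with
      | _ i j => simp [edgeFactorVE, hw]
    have hedge : (∏ e : G.edgeSet, edgeFactorVE β s (w e) e.val)
        = (∏ _e ∈ Finset.univ.filter (fun e : G.edgeSet => w e = true),
            (1 - Real.exp (-2 * β))) *
          ∏ _e ∈ Finset.univ.filter (fun e : G.edgeSet => w e = false),
            Real.exp (-2 * β) := by
      rw [← Finset.prod_filter_mul_prod_filter_not Finset.univ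
        (fun e : G.edgeSet => w e = true)]
      congr 1
      · exact Finset.prod_congr rfl (fun e he => hopen e (Finset.mem_filter.mp he).2)
      · refine Finset.prod_congr ?_ (fun e he => ?_)
        · apply Finset.filter_congr; intro e _; simp
        · have : w e = false := by
            simpa using (Finset.mem_filter.mp he).2
          exact hclosed e this
    -- field product
    have hfield : Real.exp (β * ∑ i : V, h i * s i)
        = ∏ γ : (openSubgraph G w).ConnectedComponent,
            Real.exp (β * hComp G h w γ * s γ.out) := by
      have hsum : ∑ i : V, h i * s i
          = ∑ γ : (openSubgraph G w).ConnectedComponent, hComp G h w γ * s γ.out := by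
        rw [← Finset.sum_fiberwise Finset.univ
          (fun i => (openSubgraph G w).connectedComponentMk i) (fun i => h i * s i)]
        refine Finset.sum_congr rfl (fun γ _ => ?_)
        rw [hComp, Finset.sum_mul]
        refine Finset.sum_congr rfl (fun i hi => ?_)
        have hmk : (openSubgraph G w).connectedComponentMk i = γ :=
          (Finset.mem_filter.mp hi).2
        have : s i = s γ.out := hc i γ.out (hmk.trans (Quot.out_eq γ).symm)
        rw [this]
      rw [hsum, Finset.mul_sum, Real.exp_sum]
      exact Finset.prod_congr rfl (fun γ _ => by rw [mul_assoc])
    rw [hedge, hfield]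
    have hD : ∀ γ : (openSubgraph G w).ConnectedComponent,
        Real.exp (β * hComp G h w γ) + Real.exp (-(β * hComp G h w γ)) ≠ 0 := by
      intro γ
      positivity
    have : (∏ γ : (openSubgraph G w).ConnectedComponent,
          (Real.exp (β * hComp G h w γ) + Real.exp (-(β * hComp G h w γ)))) *
        (∏ γ : (openSubgraph G w).ConnectedComponent,
          Real.exp (β * hComp G h w γ * s γ.out) /
            (Real.exp (β * hComp G h w γ) + Real.exp (-(β * hComp G h w γ))))
        = ∏ γ : (openSubgraph G w).ConnectedComponent,
            Real.exp (β * hComp G h w γ * s γ.out) := by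
      rw [← Finset.prod_mul_distrib]
      exact Finset.prod_congr rfl (fun γ _ => mul_div_cancel₀ _ (hD γ))
    rw [← this]
    ring
  · unfold WVE swQ
    rw [if_neg hc]
    unfold Compatible at hc
    push_neg at hc
    obtain ⟨i, j, hmk, hne⟩ := hc
    obtain ⟨p⟩ := SimpleGraph.ConnectedComponent.exact hmk
    obtain ⟨u, v, hadj, huv⟩ := walk_exists_adj_ne s (openSubgraph G w) p hne
    obtain ⟨hGadj, hw⟩ := hadj
    have hzero : edgeFactorVE β s
        (w ⟨Sym2.mk u v, G.mem_edgeSet.mpr hGadj⟩) (Sym2.mk u v) = 0 := by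
      rw [hw]; simp [edgeFactorVE, huv]
    rw [Finset.prod_eq_zero (Finset.mem_univ
      (⟨Sym2.mk u v, G.mem_edgeSet.mpr hGadj⟩ : G.edgeSet)) hzero]
    ring

end Aux

/-- Detailed balance of the full Swendsen-Wang kernel
`K(s, t) = Σ_w P(s, w) · Q(w, t)`: for all spin configurations `s`, `t`,
`W_V(s) · K(s, t) = W_V(t) · K(t, s)`. -/
theorem swendsenWang_detailed_balance (G : SimpleGraph V) [DecidableRel G.Adj]
    (β : ℝ) (hβ : 0 < β) (h : V → ℝ) (s t : V → ℝ)
    (hs : ∀ i, s i = 1 ∨ s i = -1) (ht : ∀ i, t i = 1 ∨ t i = -1) :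
    WV G β h s * (∑ w : G.edgeSet → Bool, swP G β s w * swQ G β h w t)
      = WV G β h t * (∑ w : G.edgeSet → Bool, swP G β t w * swQ G β h w s) := by
  have key : ∀ (u : V → ℝ), (∀ i, u i = 1 ∨ u i = -1) → ∀ w : G.edgeSet → Bool,
      WV G β h u * swP G β u w
        = Real.exp β ^ (Fintype.card G.edgeSet) * (WE G β h w * swQ G β h w u) := by
    intro u hu w
    rw [step1 β u G h hu w, step2 β u G h w]
  rw [Finset.mul_sum, Finset.mul_sum]
  refine Finset.sum_congr rfl (fun w _ => ?_)
  linear_combination (swQ G β h w t) * key s hs w - (swQ G β h w s) * key t ht w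

end
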